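/- Let ε ≥ 0, δ_q ≥ 0, α ∈ [0,1), and let W ≥ 1 be a natural number. Suppose for each segment index k ≥ 1 there is a sequence (e_{k,j})_{0 ≤ j ≤ W} of nonnegative real numbers and a context error η_k ≥ 0 such that: (i) e_{k,0} ≤ η_k; (ii) e_{k,j} ≤ ε + α·e_{k,j−1} for all 1 ≤ j ≤ W; (iii) η_1 = 0; (iv) η_{k+1} ≤ e_{k,W} + δ_q for all k ≥ 1. Then every frame-level error satisfies e_{k,j} ≤ W·ε + (W·ε + δ_q)/(1 − α^W) for all k ≥ 1 and 1 ≤ j ≤ W; in particular, for any rollout horizon T, the maximum frame error under sliding-window re-encoding is bounded by W·ε + (W·ε + δ_q)/(1 − α^W), a quantity that does not depend on T. -/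

import Mathlib

/-- Proposition 1 (stability of sliding-window re-encoding): with per-step
error bound `ε`, decode–re-encode quantization error bound `δ_q`, contraction
factor `α ∈ [0,1)`, and window size `W ≥ 1`, if within each segment `k ≥ 1`
the frame errors satisfy `e k 0 ≤ η k` and `e k j ≤ ε + α * e k (j-1)` for
`1 ≤ j ≤ W`, the initial context is ground truth (`η 1 = 0`), and contexts
refresh as `η (k+1) ≤ e k W + δ_q`, then every frame error satisfies
`e k j ≤ W * ε + (W * ε + δ_q) / (1 - α^W)`, a bound independent of the
rollout horizon. -/
theorem swr_stability
    (ε δq α : ℝ) (hε : 0 ≤ ε) (hδq : 0 ≤ δq) (hα0 : 0 ≤ α) (hα1 : α < 1)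
    (W : ℕ) (hW : 1 ≤ W)
    (e : ℕ → ℕ → ℝ) (η : ℕ → ℝ)
    (he_nonneg : ∀ k, 1 ≤ k → ∀ j, j ≤ W → 0 ≤ e k j)
    (hη_nonneg : ∀ k, 1 ≤ k → 0 ≤ η k)
    (hctx : ∀ k, 1 ≤ k → e k 0 ≤ η k)
    (hrec : ∀ k, 1 ≤ k → ∀ j, 1 ≤ j → j ≤ W → e k j ≤ ε + α * e k (j - 1))
    (h1 : η 1 = 0)
    (hrefresh : ∀ k, 1 ≤ k → η (k + 1) ≤ e k W + δq) :
    ∀ k, 1 ≤ k → ∀ j, 1 ≤ j → j ≤ W →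
      e k j ≤ (W : ℝ) * ε + ((W : ℝ) * ε + δq) / (1 - α ^ W) := by
  have hαW : α ^ W < 1 := pow_lt_one₀ hα0 hα1 (by omega)
  have hpos : 0 < 1 - α ^ W := by linarith
  set B : ℝ := ((W : ℝ) * ε + δq) / (1 - α ^ W) with hB
  have hWε : 0 ≤ (W : ℝ) * ε := mul_nonneg (Nat.cast_nonneg _) hε
  have hBnn : 0 ≤ B := div_nonneg (by linarith) (le_of_lt hpos)
  -- within-segment bound
  have hseg : ∀ k, 1 ≤ k → ∀ j, j ≤ W → e k j ≤ (j : ℝ) * ε + α ^ j * η k := by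
    intro k hk j
    induction j with
    | zero => intro _; simpa using hctx k hk
    | succ j ih =>
      intro hjW
      have hj : j ≤ W := Nat.le_of_succ_le hjW
      have h1' := hrec k hk (j + 1) (by omega) hjW
      simp only [Nat.add_sub_cancel] at h1'
      have h2 := ih hj
      have hη := hη_nonneg k hk
      have hαj : α ^ j ≤ 1 := pow_le_one₀ hα0 hα1.le
      have hαle : α ≤ 1 := hα1.le
      calc e k (j + 1) ≤ ε + α * e k j := h1'
        _ ≤ ε + α * ((j : ℝ) * ε + α ^ j * η k) := by
            have := mul_le_mul_of_nonneg_left h2 hα0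
            linarith
        _ ≤ ((j : ℝ) + 1) * ε + α ^ (j + 1) * η k := by
            have hje : 0 ≤ (j : ℝ) * ε := mul_nonneg (Nat.cast_nonneg _) hε
            have : α * ((j : ℝ) * ε) ≤ (j : ℝ) * ε := by
              nlinarith
            ring_nf
            nlinarith [pow_nonneg hα0 j]
        _ = ((j + 1 : ℕ) : ℝ) * ε + α ^ (j + 1) * η k := by push_cast; ring
  -- context bound: η k ≤ B
  have hηB : ∀ k, 1 ≤ k → η k ≤ B := by
    intro k hk
    induction k with
    | zero => omega
    | succ k ih =>
      rcases Nat.eq_or_lt_of_le hk with h | h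
      · rw [← h]; rw [h1]; exact hBnn
      · have hk1 : 1 ≤ k := by omega
        have hW' := hseg k hk1 W le_rfl
        have hαWη : α ^ W * η k ≤ α ^ W * B :=
          mul_le_mul_of_nonneg_left (ih hk1) (pow_nonneg hα0 W)
        have hBe : (W : ℝ) * ε + α ^ W * B + δq = B := by
          rw [hB]
          field_simp
          ring
        calc η (k + 1) ≤ e k W + δq := hrefresh k hk1
          _ ≤ (W : ℝ) * ε + α ^ W * η k + δq := by linarith
          _ ≤ (W : ℝ) * ε + α ^ W * B + δq := by linarith
          _ = B := hBe
  intro k hk j hj hjW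
  have h1' := hseg k hk j hjW
  have hαj : α ^ j ≤ 1 := pow_le_one₀ hα0 hα1.le
  have hη := hη_nonneg k hk
  have hjε : (j : ℝ) * ε ≤ (W : ℝ) * ε :=
    mul_le_mul_of_nonneg_right (by exact_mod_cast hjW) hε
  have : α ^ j * η k ≤ η k := by nlinarith
  have := hηB k hk
  linarith
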